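/- Let U be a vector space over a field F with basis B = {e₁,...,e_v}, let k ≥ 2 with 2k < v, and suppose the characteristic of F does not divide k. Then the family of all sums e_{i₁} + ... + e_{i_k} over k-element subsets {i₁,...,i_k} ⊆ {1,...,v} spans U. -/

import Mathlib

/-- If `e₁,…,e_v` is a basis of `U`, `k ≥ 2`, `2k < v`, and `char F ∤ k`, then the sums
`e_{i₁} + ⋯ + e_{i_k}` over all `k`-element index sets span `U`. -/
theorem sums_span {F U : Type*} [Field F] [AddCommGroup U] [Module F U]
    (v k : ℕ) (b : Module.Basis (Fin v) F U)
    (hk : 2 ≤ k) (hv : 2 * k < v) (hchar : (k : F) ≠ 0) :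
    Submodule.span F
        {u : U | ∃ t : Finset (Fin v), t.card = k ∧ u = ∑ i ∈ t, b i} = ⊤ := by
  set S : Set U := {u : U | ∃ t : Finset (Fin v), t.card = k ∧ u = ∑ i ∈ t, b i} with hS
  have hdiff : ∀ i j : Fin v, b i - b j ∈ Submodule.span F S := by
    intro i j
    rcases eq_or_ne i j with rfl | hij
    · simp
    · obtain ⟨t, hts, htc⟩ := Finset.exists_subset_card_eq (s := Finset.univ \ {i, j}) (n := k-1) (by
        rw [Finset.card_sdiff_of_subset (by simp)]
        rw [Finset.card_univ, Finset.card_insert_of_notMem (by simpa using hij),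
          Finset.card_singleton]
        simp only [Fintype.card_fin]
        omega)
      have hi : i ∉ t := fun h => by simpa using hts h
      have hj : j ∉ t := fun h => by simpa using hts h
      have h1 : (∑ x ∈ insert i t, b x) ∈ S :=
        ⟨insert i t, by rw [Finset.card_insert_of_notMem hi]; omega, rfl⟩
      have h2 : (∑ x ∈ insert j t, b x) ∈ S :=
        ⟨insert j t, by rw [Finset.card_insert_of_notMem hj]; omega, rfl⟩
      have h3 := Submodule.sub_mem (Submodule.span F S) (Submodule.subset_span h1) (Submodule.subset_span h2)
      rw [Finset.sum_insert hi, Finset.sum_insert hj] at h3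
      simpa using h3
  have hb : ∀ i, b i ∈ Submodule.span F S := by
    intro i
    obtain ⟨t, -, htc⟩ := Finset.exists_subset_card_eq (s := (Finset.univ : Finset (Fin v))) (n := k)
      (by simp only [Finset.card_univ, Fintype.card_fin]; omega)
    have hsum : (∑ x ∈ t, b x) ∈ Submodule.span F S := Submodule.subset_span ⟨t, htc, rfl⟩
    have hd : (∑ x ∈ t, (b i - b x)) ∈ Submodule.span F S :=
      Submodule.sum_mem _ fun x _ => hdiff i x
    have key : (k : F) • b i = ∑ x ∈ t, b x + ∑ x ∈ t, (b i - b x) := by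
      rw [Finset.sum_sub_distrib, Finset.sum_const, htc]
      rw [← Nat.cast_smul_eq_nsmul F]
      abel
    have hmem : (k : F) • b i ∈ Submodule.span F S := key ▸ Submodule.add_mem _ hsum hd
    have : b i = (k : F)⁻¹ • ((k : F) • b i) := by
      rw [smul_smul, inv_mul_cancel₀ hchar, one_smul]
    rw [this]
    exact Submodule.smul_mem _ _ hmem
  rw [eq_top_iff, ← b.span_eq]
  apply Submodule.span_le.mpr
  rintro - ⟨i, rfl⟩
  exact hb i
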